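/- Let M be a finite paving matroid on a ground set S of rank r ≥ 2, and let X ⊆ S with |X| = r + 1 be such that X = C ∪ B for some circuit C of M with |C| = r and some basis B of M. Then there is exactly one circuit of M of cardinality r contained in X. -/

import Mathlib

open Set

namespace Matroid

variable {α : Type*}

/-- A circuit of a matroid: a minimal dependent set. -/
def Circuit' (M : Matroid α) (C : Set α) : Prop :=
  M.Dep C ∧ ∀ D, D ⊂ C → M.Indep D

/-- The rank of a subset `X`: the maximum cardinality of an independent subset of `X`. -/
noncomputable def rk' (M : Matroid α) (X : Set α) : ℕ :=
  sSup {n | ∃ I, I ⊆ X ∧ M.Indep I ∧ I.ncard = n}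

/-- A hyperplane of a matroid of rank `r`: a maximal subset of the ground set of rank `r - 1`. -/
def Hyperplane' (M : Matroid α) (H : Set α) : Prop :=
  H ⊆ M.E ∧ M.rk' H = M.rk' M.E - 1 ∧
    ∀ Y, H ⊂ Y → Y ⊆ M.E → M.rk' Y ≠ M.rk' M.E - 1

/-- A matroid is paving if it has no circuits of cardinality less than its rank. -/
def Paving (M : Matroid α) : Prop :=
  ∀ C, M.Circuit' C → M.rk' M.E ≤ C.ncard

/-- A matroid is sparse-paving if both it and its dual are paving. -/
def SparsePaving (M : Matroid α) : Prop :=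
  M.Paving ∧ M✶.Paving

/-- In a finite matroid, `rk' M.E` equals the cardinality of any base. -/
lemma rk'_ground_eq_base_ncard (M : Matroid α) [M.Finite] {B : Set α} (hB : M.IsBase B) :
    M.rk' M.E = B.ncard := by
  have hub : ∀ n ∈ {n | ∃ I, I ⊆ M.E ∧ M.Indep I ∧ I.ncard = n}, n ≤ B.ncard := by
    rintro n ⟨I, hIE, hI, rfl⟩
    obtain ⟨B', hB', hIB'⟩ := hI.exists_isBase_superset
    have hB'fin : B'.Finite := M.set_finite B' hB'.subset_ground
    calc I.ncard ≤ B'.ncard := ncard_le_ncard hIB' hB'fin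
      _ = B.ncard := hB'.ncard_eq_ncard_of_isBase hB
  refine le_antisymm (csSup_le' hub) ?_
  exact le_csSup ⟨B.ncard, hub⟩ ⟨B, hB.subset_ground, hB.indep, rfl⟩

end Matroid

theorem stmt12 {α : Type*} (M : Matroid α) [M.Finite] (r : ℕ)
    (hr : 2 ≤ r) (hrank : M.rk' M.E = r) (hpav : M.Paving)
    (X : Set α) (hXE : X ⊆ M.E) (hX : X.ncard = r + 1)
    (hCB : ∃ C B, M.Circuit' C ∧ C.ncard = r ∧ M.IsBase B ∧ X = C ∪ B) :
    ∃! C, M.Circuit' C ∧ C.ncard = r ∧ C ⊆ X := by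
  obtain ⟨C, B, hC, hCr, hB, hXCB⟩ := hCB
  have hXfin : X.Finite := M.set_finite X hXE
  have hCX : C ⊆ X := hXCB ▸ Set.subset_union_left
  have hBX : B ⊆ X := hXCB ▸ Set.subset_union_right
  have hBr : B.ncard = r := by
    rw [← M.rk'_ground_eq_base_ncard hB, hrank]
  -- key: any circuit of size r inside X equals C
  have key : ∀ D, M.Circuit' D → D.ncard = r → D ⊆ X → D = C := by
    intro D hD hDr hDX
    by_contra hne
    -- X \ C and X \ D are singletons
    have hdiff : ∀ Y : Set α, Y ⊆ X → Y.ncard = r → ∃ y, X \ Y = {y} := by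
      intro Y hYX hYr
      have : (X \ Y).ncard = 1 := by
        rw [Set.ncard_diff hYX (hXfin.subset hYX), hX, hYr]; omega
      exact Set.ncard_eq_one.mp this
    obtain ⟨x, hx⟩ := hdiff C hCX hCr
    obtain ⟨d, hd⟩ := hdiff D hDX hDr
    have hCeq : C = X \ {x} := by
      rw [← hx]; simp [Set.diff_diff_right_self, Set.inter_eq_self_of_subset_right hCX]
    have hDeq : D = X \ {d} := by
      rw [← hd]; simp [Set.diff_diff_right_self, Set.inter_eq_self_of_subset_right hDX]
    have hxX : x ∈ X := by have := hx ▸ (Set.mem_singleton x); exact this.1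
    have hdX : d ∈ X := by have := hd ▸ (Set.mem_singleton d); exact this.1
    have hxd : x ≠ d := by
      intro h; apply hne; rw [hDeq, hCeq, h]
    set K : Set α := X \ {x, d} with hK
    have hKC : K ⊂ C := by
      constructor
      · rw [hCeq]; exact Set.diff_subset_diff_right (by simp)
      · intro hsub
        have hdC : d ∈ C := by rw [hCeq]; exact ⟨hdX, by simp [hxd.symm]⟩
        have := hsub hdC
        exact this.2 (by simp)
    have hKindep : M.Indep K := hC.2 K hKC
    have hKE : K ⊆ M.E := fun a ha => hXE ha.1
    have hinsx : insert x K = D := by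
      rw [hDeq, hK]; ext a
      simp only [Set.mem_insert_iff, Set.mem_diff, Set.mem_singleton_iff, Set.mem_insert_iff]
      constructor
      · rintro (rfl | ⟨haX, h⟩)
        · exact ⟨hxX, hxd⟩
        · exact ⟨haX, fun h' => h (Or.inr h')⟩
      · rintro ⟨haX, had⟩
        by_cases hax : a = x
        · exact Or.inl hax
        · exact Or.inr ⟨haX, by tauto⟩
    have hinsd : insert d K = C := by
      rw [hCeq, hK]; ext a
      simp only [Set.mem_insert_iff, Set.mem_diff, Set.mem_singleton_iff, Set.mem_insert_iff]
      constructor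
      · rintro (rfl | ⟨haX, h⟩)
        · exact ⟨hdX, hxd.symm⟩
        · exact ⟨haX, fun h' => h (Or.inl h')⟩
      · rintro ⟨haX, hax⟩
        by_cases had : a = d
        · exact Or.inl had
        · exact Or.inr ⟨haX, by tauto⟩
    have hxK : x ∉ K := fun h => h.2 (by simp)
    have hdK : d ∉ K := fun h => h.2 (by simp)
    have hxcl : x ∈ M.closure K := by
      rw [hKindep.mem_closure_iff_of_notMem hxK, hinsx]
      exact hD.1
    have hdcl : d ∈ M.closure K := by
      rw [hKindep.mem_closure_iff_of_notMem hdK, hinsd]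
      exact hC.1
    have hXcl : X ⊆ M.closure K := by
      intro a ha
      by_cases hax : a = x
      · exact hax ▸ hxcl
      by_cases had : a = d
      · exact had ▸ hdcl
      · exact M.subset_closure K hKE ⟨ha, by simp [hax, had]⟩
    have hKX : K ⊆ X := Set.diff_subset
    have hKbasis : M.IsBasis K X := hKindep.isBasis_of_subset_of_subset_closure hKX hXcl
    obtain ⟨J, hJ, hBJ⟩ := hB.indep.subset_isBasis_of_subset hBX hXE
    have hJK : J.encard = K.encard := hJ.encard_eq_encard hKbasis
    have hJfin : J.Finite := hXfin.subset hJ.subset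
    have hKfin : K.Finite := hXfin.subset hKX
    have hJKn : J.ncard = K.ncard := by
      rw [Set.ncard_def, Set.ncard_def, hJK]
    have hKcard : K.ncard = r - 1 := by
      have hsub : ({x, d} : Set α) ⊆ X := by
        rintro a (rfl | rfl)
        exacts [hxX, hdX]
      rw [hK, Set.ncard_diff hsub ((hXfin.subset hsub)), hX, Set.ncard_pair hxd]
      omega
    have hBJn : B.ncard ≤ J.ncard := Set.ncard_le_ncard hBJ hJfin
    omega
  exact ⟨C, ⟨hC, hCr, hCX⟩, fun D ⟨h1, h2, h3⟩ => key D h1 h2 h3⟩
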